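/- If in addition there exists c ∈ (a,b) such that ϕ'(θ) ≤ 0 for all θ ∈ (a,c] and ϕ'(θ) ≥ 0 for all θ ∈ [c,b), then v(θ,θ̃)² ≤ 1/ϕ(c) for all θ, θ̃ ∈ (a,c]. -/

import Mathlib

/-- v(θ,θ̃)² ≤ 1/ϕ(c) for all θ, θ̃ ∈ (a,c]. -/
theorem stmt_6 (a b : ℝ) (hab : a < b)
    (ϕ ϕd uI uId uIdd uII uIId uIIdd : ℝ → ℝ)
    (hϕd : ∀ θ ∈ Set.Ioo a b, HasDerivAt ϕ (ϕd θ) θ)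
    (hϕdc : ContinuousOn ϕd (Set.Ioo a b))
    (hϕpos : ∀ θ ∈ Set.Ioo a b, 0 < ϕ θ)
    (huId : ∀ θ ∈ Set.Ioo a b, HasDerivAt uI (uId θ) θ)
    (huIdd : ∀ θ ∈ Set.Ioo a b, HasDerivAt uId (uIdd θ) θ)
    (huIId : ∀ θ ∈ Set.Ioo a b, HasDerivAt uII (uIId θ) θ)
    (huIIdd : ∀ θ ∈ Set.Ioo a b, HasDerivAt uIId (uIIdd θ) θ)
    (hodeI : ∀ θ ∈ Set.Ioo a b, uIdd θ + ϕ θ * uI θ = 0)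
    (hodeII : ∀ θ ∈ Set.Ioo a b, uIIdd θ + ϕ θ * uII θ = 0)
    (hW : ∀ θ ∈ Set.Ioo a b, uI θ * uIId θ - uId θ * uII θ = 1)
    (c : ℝ) (hc : c ∈ Set.Ioo a b)
    (hdec : ∀ θ ∈ Set.Ioc a c, ϕd θ ≤ 0)
    (hinc : ∀ θ ∈ Set.Ico c b, 0 ≤ ϕd θ) :
    ∀ θ ∈ Set.Ioc a c, ∀ θt ∈ Set.Ioc a c,
      (uI θ * uII θt - uI θt * uII θ) ^ 2 ≤ 1 / ϕ c := by
  have hsub : Set.Ioc a c ⊆ Set.Ioo a b := fun x hx => ⟨hx.1, lt_of_le_of_lt hx.2 hc.2⟩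
  have hϕcont : ContinuousOn ϕ (Set.Ioc a c) :=
    fun x hx => ((hϕd x (hsub hx)).continuousAt).continuousWithinAt
  have hϕanti : AntitoneOn ϕ (Set.Ioc a c) := by
    apply antitoneOn_of_deriv_nonpos (convex_Ioc a c) hϕcont
    · intro x hx
      rw [interior_Ioc] at hx
      exact ((hϕd x (hsub (Set.Ioo_subset_Ioc_self hx))).differentiableAt).differentiableWithinAt
    · intro x hx
      rw [interior_Ioc] at hx
      rw [(hϕd x (hsub (Set.Ioo_subset_Ioc_self hx))).deriv]
      exact hdec x (Set.Ioo_subset_Ioc_self hx)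
  have key : ∀ θ ∈ Set.Ioc a c, ∀ θt ∈ Set.Ioc a c, θ ≤ θt →
      (uI θ * uII θt - uI θt * uII θ) ^ 2 ≤ 1 / ϕ c := by
    intro θ hθ θt hθt hle
    set w : ℝ → ℝ := fun x => uI x * uII θt - uI θt * uII x with hw
    set wd : ℝ → ℝ := fun x => uId x * uII θt - uI θt * uIId x with hwd
    set E : ℝ → ℝ := fun x => w x ^ 2 + wd x ^ 2 / ϕ x with hE
    have hwD : ∀ x ∈ Set.Ioo a b, HasDerivAt w (wd x) x := fun x hx =>
      ((huId x hx).mul_const _).sub ((huIId x hx).const_mul _)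
    have hwdD : ∀ x ∈ Set.Ioo a b, HasDerivAt wd (-(ϕ x * w x)) x := by
      intro x hx
      have h := ((huIdd x hx).mul_const (uII θt)).sub ((huIIdd x hx).const_mul (uI θt))
      have h1 := hodeI x hx
      have h2 := hodeII x hx
      refine h.congr_deriv (Eq.symm ?_)
      simp only [hw]
      linear_combination (-uII θt) * h1 + uI θt * h2
    have hED : ∀ x ∈ Set.Ioo a b, HasDerivAt E (-(wd x ^ 2 * ϕd x / ϕ x ^ 2)) x := by
      intro x hx
      have hne : ϕ x ≠ 0 := (hϕpos x hx).ne'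
      have h1 : HasDerivAt (fun y => w y ^ 2) (2 * w x ^ 1 * wd x) x := by
        simpa using (hwD x hx).fun_pow 2
      have h2 : HasDerivAt (fun y => wd y ^ 2) (2 * wd x ^ 1 * -(ϕ x * w x)) x := by
        simpa using (hwdD x hx).fun_pow 2
      have h3 := h2.div (hϕd x hx) hne
      have h4 := h1.add h3
      refine h4.congr_deriv (Eq.symm ?_)
      field_simp
      ring
    have hEcont : ContinuousOn E (Set.Ioc a c) :=
      fun x hx => ((hED x (hsub hx)).continuousAt).continuousWithinAt
    have hEmono : MonotoneOn E (Set.Ioc a c) := by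
      apply monotoneOn_of_deriv_nonneg (convex_Ioc a c) hEcont
      · intro x hx
        rw [interior_Ioc] at hx
        exact ((hED x (hsub (Set.Ioo_subset_Ioc_self hx))).differentiableAt).differentiableWithinAt
      · intro x hx
        rw [interior_Ioc] at hx
        rw [(hED x (hsub (Set.Ioo_subset_Ioc_self hx))).deriv]
        have hd := hdec x (Set.Ioo_subset_Ioc_self hx)
        have h5 : wd x ^ 2 * ϕd x ≤ 0 := mul_nonpos_of_nonneg_of_nonpos (sq_nonneg _) hd
        have h6 : wd x ^ 2 * ϕd x / ϕ x ^ 2 ≤ 0 :=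
          div_nonpos_of_nonpos_of_nonneg h5 (sq_nonneg _)
        linarith
    have hθb := hsub hθ
    have hθtb := hsub hθt
    have hw0 : w θt = 0 := by simp [hw]
    have hwd1 : wd θt = -1 := by
      have := hW θt hθtb
      simp only [hwd]
      linarith
    have hEθt : E θt = 1 / ϕ θt := by
      simp [hE, hw0, hwd1]
    have h1 : w θ ^ 2 ≤ E θ :=
      le_add_of_nonneg_right (div_nonneg (sq_nonneg _) (hϕpos θ hθb).le)
    have h2 : E θ ≤ E θt := hEmono hθ hθt hle
    have hcm : c ∈ Set.Ioc a c := ⟨hc.1, le_refl c⟩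
    have h3 : ϕ c ≤ ϕ θt := hϕanti hθt hcm hθt.2
    have h4 : 1 / ϕ θt ≤ 1 / ϕ c :=
      one_div_le_one_div_of_le (hϕpos c hc) h3
    have : w θ ^ 2 ≤ 1 / ϕ c := by
      rw [hEθt] at h2
      exact le_trans h1 (le_trans h2 h4)
    simpa [hw] using this
  intro θ hθ θt hθt
  rcases le_total θ θt with h | h
  · exact key θ hθ θt hθt h
  · have := key θt hθt θ hθ h
    have heq : (uI θ * uII θt - uI θt * uII θ) ^ 2
        = (uI θt * uII θ - uI θ * uII θt) ^ 2 := by ring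
    rw [heq]
    exact this
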